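/- Let A be a Wheeler DFA with adjacent states u_i, u_{i+1} and suppose u_i ≉ u_{i+1} (not Myhill-Nerode equivalent). Let α be a shortest string witnessing the inequivalence. Then there exists a (possibly shorter) string β such that v = δ̂(u_i, β) and v' = δ̂(u_{i+1}, β) are both defined, v ≠ v', and either out(v) ≠ out(v') or exactly one of v, v' is final. -/
import Mathlib


/-- A Wheeler DFA over a linearly ordered state set `Q` (the Wheeler order)
and a linearly ordered alphabet `A`.  The transition function is partial
(`Option`-valued).  The three Wheeler axioms are part of the structure. -/
structure WDFA (Q A : Type) [LinearOrder Q] [LinearOrder A] where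
  delta : Q → A → Option Q
  start : Q
  F : Set Q
  /-- Wheeler axiom (i): the initial state is minimum. -/
  start_le : ∀ u, start ≤ u
  /-- Wheeler axiom (ii). -/
  w2 : ∀ {u v : Q} {a b : A} {u' v' : Q},
      delta u a = some u' → delta v b = some v' → a < b → u' < v'
  /-- Wheeler axiom (iii). -/
  w3 : ∀ {u v : Q} {a : A} {u' v' : Q},
      delta u a = some u' → delta v a = some v' → u < v → u' ≤ v'

namespace WDFA

variable {Q A : Type} [LinearOrder Q] [LinearOrder A]

/-- Extension of the (partial) transition function to strings. -/
def dhat (M : WDFA Q A) : Q → List A → Option Q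
  | q, [] => some q
  | q, a :: w => (M.delta q a).bind (fun p => M.dhat p w)

/-- `q` accepts the string `w`. -/
def Acc (M : WDFA Q A) (q : Q) (w : List A) : Prop :=
  ∃ p, M.dhat q w = some p ∧ p ∈ M.F

/-- Set of labels of outgoing edges of `q`. -/
def out (M : WDFA Q A) (q : Q) : Set A := {a | (M.delta q a).isSome}

/-- Myhill–Nerode state equivalence (with equal domains of definition). -/
def MN (M : WDFA Q A) (u v : Q) : Prop :=
  ∀ w : List A, (M.dhat u w).isSome = (M.dhat v w).isSome ∧ (M.Acc u w ↔ M.Acc v w)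

/-- Myhill–Nerode state equivalence, acceptance-only version
(undefined counts as rejecting). -/
def MNacc (M : WDFA Q A) (u v : Q) : Prop :=
  ∀ w : List A, M.Acc u w ↔ M.Acc v w

/-- `u` and `v` are adjacent in the Wheeler order. -/
def Adj (M : WDFA Q A) (u v : Q) : Prop :=
  u < v ∧ ∀ w : Q, ¬ (u < w ∧ w < v)

/-- `lam` is the incoming-label map: `lam start = ⊥` (the special symbol `#`)
and every transition entering `v` is labelled `lam v`. -/
def HasLam (M : WDFA Q A) (lam : Q → WithBot A) : Prop :=
  lam M.start = ⊥ ∧ ∀ u a v, M.delta u a = some v → lam v = (a : WithBot A)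

/-- Every non-initial state has an incoming transition (reachability). -/
def Reach1 (M : WDFA Q A) : Prop :=
  ∀ u, u ≠ M.start → ∃ p a, M.delta p a = some u

/-- Every state accepts some string (is final or reaches a final state). -/
def Coacc (M : WDFA Q A) : Prop := ∀ u, ∃ w, M.Acc u w

/-- The minimum-WDFA equivalence `≡`: `u` and `v` have the same incoming
label, are Myhill–Nerode equivalent, and so is every state between them in
the Wheeler order. -/
def Equ (M : WDFA Q A) (lam : Q → WithBot A) (u v : Q) : Prop :=
  lam u = lam v ∧ M.MN u v ∧
    ∀ w, min u v ≤ w → w ≤ max u v → lam w = lam u ∧ M.MN w u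

/-- `(u,v)` is a node of the border graph: adjacent states with equal
incoming labels. -/
def IsBorder (M : WDFA Q A) (lam : Q → WithBot A) (u v : Q) : Prop :=
  M.Adj u v ∧ lam u = lam v

/-- Edge relation of the border graph `B(A)`: there is an edge from the
border `x` to the border `y` whenever `x.1 = δ(y.1, λ(x.1))` and
`x.2 = δ(y.2, λ(x.1))`. -/
def EdgeZ (M : WDFA Q A) (lam : Q → WithBot A) : Q × Q → Q × Q → Prop :=
  fun x y => M.IsBorder lam x.1 x.2 ∧ M.IsBorder lam y.1 y.2 ∧
    ∃ a : A, lam x.1 = (a : WithBot A) ∧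
      M.delta y.1 a = some x.1 ∧ M.delta y.2 a = some x.2

/-- Transition function of the quotient automaton `A/st`
(`δ([u],a) = [δ(u,a)]`, implemented via representatives). -/
noncomputable def qdelta (M : WDFA Q A) (st : Setoid Q) (c : Quotient st) (a : A) :
    Option (Quotient st) :=
  (M.delta (Quotient.out c) a).map (Quotient.mk st)

/-- String extension of the quotient transition function. -/
noncomputable def qdhat (M : WDFA Q A) (st : Setoid Q) : Quotient st → List A → Option (Quotient st)
  | c, [] => some c
  | c, a :: w => (M.qdelta st c a).bind (fun d => M.qdhat st d w)

/-- The quotient automaton accepts `w`. -/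
def qAcc (M : WDFA Q A) (st : Setoid Q) (w : List A) : Prop :=
  ∃ c, M.qdhat st (Quotient.mk st M.start) w = some c ∧
    ∃ u ∈ M.F, Quotient.mk st u = c

/-- Order induced on `≡`-classes by the Wheeler order (classes are
intervals, so comparing arbitrary representatives is well defined). -/
def qle (st : Setoid Q) (c d : Quotient st) : Prop :=
  c = d ∨ ∀ u v : Q, Quotient.mk st u = c → Quotient.mk st v = d → u < v

end WDFA


namespace WDFA

variable {Q A : Type} [LinearOrder Q] [LinearOrder A]

lemma acc_nil (M : WDFA Q A) (q : Q) : M.Acc q [] ↔ q ∈ M.F := by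
  simp [Acc, dhat]

lemma acc_cons_some (M : WDFA Q A) {q p : Q} {a : A} (h : M.delta q a = some p)
    (w : List A) : M.Acc q (a :: w) ↔ M.Acc p w := by
  simp [Acc, dhat, h]

lemma acc_cons_none (M : WDFA Q A) {q : Q} {a : A} (h : M.delta q a = none)
    (w : List A) : ¬ M.Acc q (a :: w) := by
  simp [Acc, dhat, h]

lemma wdfa_key {Q A : Type} [LinearOrder Q] [LinearOrder A]
    (M : WDFA Q A) : ∀ (α : List A) (u u' : Q), u ≠ u' →
    ¬ (M.Acc u α ↔ M.Acc u' α) →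
    ∃ (β : List A) (v v' : Q), β.length ≤ α.length ∧
      M.dhat u β = some v ∧ M.dhat u' β = some v' ∧ v ≠ v' ∧
      (M.out v ≠ M.out v' ∨ Xor' (v ∈ M.F) (v' ∈ M.F)) := by
  intro α
  induction α with
  | nil =>
    intro u u' hne hwit
    refine ⟨[], u, u', le_refl _, rfl, rfl, hne, Or.inr ?_⟩
    rw [M.acc_nil u, M.acc_nil u'] at hwit
    rcases Classical.em (u ∈ M.F) with h | h
    · exact Or.inl ⟨h, fun h' => hwit ⟨fun _ => h', fun _ => h⟩⟩
    · have h' : u' ∈ M.F := by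
        by_contra h'
        exact hwit ⟨fun hu => absurd hu h, fun hu => absurd hu h'⟩
      exact Or.inr ⟨h', h⟩
  | cons a w ih =>
    intro u u' hne hwit
    cases hu : M.delta u a with
    | none =>
      cases hu' : M.delta u' a with
      | none =>
        exact absurd ⟨fun h => absurd h (M.acc_cons_none hu w),
          fun h => absurd h (M.acc_cons_none hu' w)⟩ hwit
      | some p' =>
        refine ⟨[], u, u', by simp, rfl, rfl, hne, Or.inl ?_⟩
        intro h
        have : a ∈ M.out u' := by simp [out, hu']
        rw [← h] at this
        simp [out, hu] at this
    | some p =>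
      cases hu' : M.delta u' a with
      | none =>
        refine ⟨[], u, u', by simp, rfl, rfl, hne, Or.inl ?_⟩
        intro h
        have : a ∈ M.out u := by simp [out, hu]
        rw [h] at this
        simp [out, hu'] at this
      | some p' =>
        have hwit' : ¬ (M.Acc p w ↔ M.Acc p' w) := by
          rw [← M.acc_cons_some hu w, ← M.acc_cons_some hu' w]; exact hwit
        have hpne : p ≠ p' := by
          rintro rfl
          exact hwit' Iff.rfl
        obtain ⟨β, v, v', hlen, hd, hd', hvne, hrest⟩ := ih p p' hpne hwit'
        exact ⟨a :: β, v, v', by simpa using Nat.succ_le_succ hlen,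
          by simp [dhat, hu, hd], by simp [dhat, hu', hd'], hvne, hrest⟩

end WDFA

/-- if adjacent states `u_i, u_{i+1}` are not Myhill–Nerode
equivalent and `α` is a shortest witness, then some string `β` (no longer
than `α`) leads both to defined, distinct states that differ in their
outgoing labels or in finality (exactly one final). -/
theorem wdfa_shortest_witness {Q A : Type} [LinearOrder Q] [LinearOrder A]
    (M : WDFA Q A) (ui ui1 : Q) (hadj : M.Adj ui ui1)
    (hne : ¬ M.MNacc ui ui1) (α : List A)
    (hwit : ¬ (M.Acc ui α ↔ M.Acc ui1 α))
    (hmin : ∀ β : List A, β.length < α.length → (M.Acc ui β ↔ M.Acc ui1 β)) :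
    ∃ (β : List A) (v v' : Q), β.length ≤ α.length ∧
      M.dhat ui β = some v ∧ M.dhat ui1 β = some v' ∧ v ≠ v' ∧
      (M.out v ≠ M.out v' ∨ Xor' (v ∈ M.F) (v' ∈ M.F)) := by
  exact M.wdfa_key α ui ui1 (ne_of_lt hadj.1) hwit
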